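/- Assume the curve convention: a > 0 and y : [−a,a] → ℝ² is a C⁴ map such that for every θ ∈ [−a,a], writing θ⃗ = (cos θ, sin θ) and θ⃗⊥ = (−sin θ, cos θ), one has θ⃗·y′(θ) = 0, θ⃗⊥·y′(θ) < 0, and θ⃗·y″(θ) > 0. Suppose A₁ : [−a,a] → (−π/2, π/2) is a C¹ function with A₁(0) = 0 such that (cos A₁(θ), sin A₁(θ))·(y(θ) − y(0)) = 0 for all θ ∈ [−a,a]. Then A₁′(0) = 1/2, and there exist a′ ∈ (0,a] and constants 0 < c₁ ≤ c₂ < 1 such that c₁ ≤ A₁(θ)/θ ≤ c₂ for all θ ∈ [−a′,a′] \ {0} and c₁ ≤ A₁′(θ) ≤ c₂ for all θ ∈ [−a′,a′]. -/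

import Mathlib

open Real Set Filter Topology

private lemma tendsto_div_of_hasDerivAt0 {f : ℝ → ℝ} {f' : ℝ} (h : HasDerivAt f f' 0)
    (h0 : f 0 = 0) : Tendsto (fun θ => f θ / θ) (𝓝[≠] (0:ℝ)) (𝓝 f') := by
  have h1 := hasDerivAt_iff_tendsto_slope.mp h
  refine h1.congr fun θ => ?_
  simp [slope_def_field, h0]

/-- Under the curve convention (convex C⁴ curve parametrized by its normal angle),
the critical-direction function `A₁` (the angle whose direction is orthogonal to the
chord `y(θ) - y(0)`) satisfies `A₁'(0) = 1/2`, and `A₁(θ)/θ`, `A₁'(θ)` are bounded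
between constants `0 < c₁ ≤ c₂ < 1` near `θ = 0`. -/
theorem stmt1 (a : ℝ) (ha : 0 < a) (y : ℝ → ℝ × ℝ) (hy : ContDiff ℝ 4 y)
    (htang : ∀ θ ∈ Icc (-a) a,
      Real.cos θ * (deriv y θ).1 + Real.sin θ * (deriv y θ).2 = 0)
    (hperp : ∀ θ ∈ Icc (-a) a,
      -Real.sin θ * (deriv y θ).1 + Real.cos θ * (deriv y θ).2 < 0)
    (hcurv : ∀ θ ∈ Icc (-a) a,
      0 < Real.cos θ * (deriv (deriv y) θ).1 + Real.sin θ * (deriv (deriv y) θ).2)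
    (A₁ : ℝ → ℝ) (hA₁ : ContDiff ℝ 1 A₁)
    (hA₁mem : ∀ θ ∈ Icc (-a) a, A₁ θ ∈ Ioo (-(π / 2)) (π / 2))
    (hA₁0 : A₁ 0 = 0)
    (hortho : ∀ θ ∈ Icc (-a) a,
      Real.cos (A₁ θ) * (y θ - y 0).1 + Real.sin (A₁ θ) * (y θ - y 0).2 = 0) :
    deriv A₁ 0 = 1 / 2 ∧
    ∃ a' ∈ Ioc 0 a, ∃ c₁ c₂ : ℝ, 0 < c₁ ∧ c₁ ≤ c₂ ∧ c₂ < 1 ∧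
      (∀ θ ∈ Icc (-a') a', θ ≠ 0 → c₁ ≤ A₁ θ / θ ∧ A₁ θ / θ ≤ c₂) ∧
      (∀ θ ∈ Icc (-a') a', c₁ ≤ deriv A₁ θ ∧ deriv A₁ θ ≤ c₂) := by
  have ha0 : (0:ℝ) ∈ Icc (-a) a := ⟨by linarith, le_of_lt ha⟩
  have hyd : Differentiable ℝ y := hy.differentiable (by norm_num)
  have hy2 : ContDiff ℝ 2 y := hy.of_le (by norm_num)
  have hdy1 : ContDiff ℝ 1 (deriv y) := by
    have h2 : ContDiff ℝ ((1:ℕ) + 1) y := by exact_mod_cast hy2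
    exact (contDiff_succ_iff_deriv.mp h2).2.2
  have hA₁d : Differentiable ℝ A₁ := hA₁.differentiable (by norm_num)
  set L := deriv A₁ 0 with hLdef
  set s := (deriv y 0).2 with hsdef
  set q := (deriv (deriv y) 0).1 with hqdef
  -- basic derivative facts
  have hD : ∀ θ, HasDerivAt y (deriv y θ) θ := fun θ => (hyd θ).hasDerivAt
  have hY1 : ∀ θ, HasDerivAt (fun t => (y t).1) (deriv y θ).1 θ := fun θ => (hD θ).fst
  have hY2 : ∀ θ, HasDerivAt (fun t => (y t).2) (deriv y θ).2 θ := fun θ => (hD θ).snd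
  have hdd : HasDerivAt (deriv y) (deriv (deriv y) 0) 0 :=
    ((hdy1.differentiable (by norm_num)) 0).hasDerivAt
  have hD1 : HasDerivAt (fun t => (deriv y t).1) q 0 := hdd.fst
  have hD2 : HasDerivAt (fun t => (deriv y t).2) (deriv (deriv y) 0).2 0 := hdd.snd
  have hD10 : (deriv y 0).1 = 0 := by have := htang 0 ha0; simpa using this
  have hs : s < 0 := by have := hperp 0 ha0; simpa using this
  -- q = -s from differentiating the tangency identity
  have hq : q = -s := by
    have hg0 : (fun θ => Real.cos θ * (deriv y θ).1 + Real.sin θ * (deriv y θ).2)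
        =ᶠ[𝓝 (0:ℝ)] fun _ => (0:ℝ) := by
      filter_upwards [Icc_mem_nhds (show -a < (0:ℝ) by linarith) ha] with θ hθ
      exact htang θ hθ
    have hgd : HasDerivAt
        (fun θ => Real.cos θ * (deriv y θ).1 + Real.sin θ * (deriv y θ).2)
        (q + s) 0 := by
      have h := ((Real.hasDerivAt_cos 0).mul hD1).add ((Real.hasDerivAt_sin 0).mul hD2)
      convert h using 1
      · rfl
      · rfl
      · rfl
      simp [hD10, hsdef]
    have hgd0 : HasDerivAt
        (fun θ => Real.cos θ * (deriv y θ).1 + Real.sin θ * (deriv y θ).2) 0 0 :=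
      (hasDerivAt_const (0:ℝ) (0:ℝ)).congr_of_eventuallyEq hg0
    have := hgd.unique hgd0
    linarith
  -- tendsto facts at 0 along the punctured neighborhood
  have tY1 : Tendsto (fun θ => ((y θ).1 - (y 0).1) / θ) (𝓝[≠] (0:ℝ)) (𝓝 0) := by
    have h : HasDerivAt (fun t => (y t).1 - (y 0).1) ((deriv y 0).1) 0 := (hY1 0).sub_const _
    rw [hD10] at h
    exact tendsto_div_of_hasDerivAt0 h (by simp)
  have tY2 : Tendsto (fun θ => ((y θ).2 - (y 0).2) / θ) (𝓝[≠] (0:ℝ)) (𝓝 s) :=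
    tendsto_div_of_hasDerivAt0 ((hY2 0).sub_const _) (by simp)
  have tD1 : Tendsto (fun θ => (deriv y θ).1 / θ) (𝓝[≠] (0:ℝ)) (𝓝 q) :=
    tendsto_div_of_hasDerivAt0 hD1 hD10
  have tsinA : Tendsto (fun θ => Real.sin (A₁ θ) / θ) (𝓝[≠] (0:ℝ)) (𝓝 L) := by
    have h : HasDerivAt (fun t => Real.sin (A₁ t)) (Real.cos (A₁ 0) * L) 0 :=
      (Real.hasDerivAt_sin (A₁ 0)).comp 0 (hA₁d 0).hasDerivAt
    rw [hA₁0, Real.cos_zero, one_mul] at h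
    exact tendsto_div_of_hasDerivAt0 h (by simp [hA₁0])
  have tD2 : Tendsto (fun θ => (deriv y θ).2) (𝓝[≠] (0:ℝ)) (𝓝 s) :=
    ((continuous_snd.comp hdy1.continuous).tendsto 0).mono_left nhdsWithin_le_nhds
  have tA' : Tendsto (deriv A₁) (𝓝[≠] (0:ℝ)) (𝓝 L) :=
    ((hA₁.continuous_deriv le_rfl).tendsto 0).mono_left nhdsWithin_le_nhds
  have tcosA : Tendsto (fun θ => Real.cos (A₁ θ)) (𝓝[≠] (0:ℝ)) (𝓝 1) := by
    have : Continuous fun θ => Real.cos (A₁ θ) := Real.continuous_cos.comp hA₁.continuous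
    have h := (this.tendsto 0).mono_left (nhdsWithin_le_nhds (s := {(0:ℝ)}ᶜ))
    simpa [hA₁0] using h
  have tsinA0 : Tendsto (fun θ => Real.sin (A₁ θ)) (𝓝[≠] (0:ℝ)) (𝓝 0) := by
    have : Continuous fun θ => Real.sin (A₁ θ) := Real.continuous_sin.comp hA₁.continuous
    have h := (this.tendsto 0).mono_left (nhdsWithin_le_nhds (s := {(0:ℝ)}ᶜ))
    simpa [hA₁0] using h
  -- the scaled implicit-differentiation identity
  set H : ℝ → ℝ := fun θ =>
    deriv A₁ θ * (-Real.sin (A₁ θ)) * (((y θ).1 - (y 0).1) / θ)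
      + Real.cos (A₁ θ) * ((deriv y θ).1 / θ)
      + deriv A₁ θ * Real.cos (A₁ θ) * (((y θ).2 - (y 0).2) / θ)
      + (Real.sin (A₁ θ) / θ) * (deriv y θ).2 with hHdef
  have tH : Tendsto H (𝓝[≠] (0:ℝ)) (𝓝 (L * (-0) * 0 + 1 * q + L * 1 * s + L * s)) := by
    have h := (((((tA'.mul tsinA0.neg).mul tY1).add (tcosA.mul tD1)).add
      ((tA'.mul tcosA).mul tY2)).add (tsinA.mul tD2))
    exact h.congr (fun θ => by rw [hHdef])
  have hH0 : H =ᶠ[𝓝[≠] (0:ℝ)] fun _ => (0:ℝ) := by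
    have hmem : Ioo (-a) a ∈ 𝓝[≠] (0:ℝ) :=
      nhdsWithin_le_nhds (Ioo_mem_nhds (by linarith) ha)
    filter_upwards [hmem, self_mem_nhdsWithin] with θ hθ hθ0
    have hθ0' : θ ≠ 0 := hθ0
    -- F has derivative E θ at θ
    set F : ℝ → ℝ := fun t =>
      Real.cos (A₁ t) * ((y t).1 - (y 0).1) + Real.sin (A₁ t) * ((y t).2 - (y 0).2)
      with hFdef
    have hA : HasDerivAt A₁ (deriv A₁ θ) θ := (hA₁d θ).hasDerivAt
    have hcosA : HasDerivAt (fun t => Real.cos (A₁ t))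
        (-Real.sin (A₁ θ) * deriv A₁ θ) θ := (Real.hasDerivAt_cos (A₁ θ)).comp θ hA
    have hsinA : HasDerivAt (fun t => Real.sin (A₁ t))
        (Real.cos (A₁ θ) * deriv A₁ θ) θ := (Real.hasDerivAt_sin (A₁ θ)).comp θ hA
    have hFd : HasDerivAt F
        (-Real.sin (A₁ θ) * deriv A₁ θ * ((y θ).1 - (y 0).1)
          + Real.cos (A₁ θ) * (deriv y θ).1
          + (Real.cos (A₁ θ) * deriv A₁ θ * ((y θ).2 - (y 0).2)
            + Real.sin (A₁ θ) * (deriv y θ).2)) θ := by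
      have h := (hcosA.mul ((hY1 θ).sub_const ((y 0).1))).add (hsinA.mul ((hY2 θ).sub_const ((y 0).2)))
      exact h
    have hF0 : F =ᶠ[𝓝 θ] fun _ => (0:ℝ) := by
      filter_upwards [isOpen_Ioo.mem_nhds hθ] with t ht
      have h := hortho t (Ioo_subset_Icc_self ht)
      simpa [hFdef, Prod.fst_sub, Prod.snd_sub] using h
    have hFd0 : HasDerivAt F 0 θ :=
      (hasDerivAt_const θ (0:ℝ)).congr_of_eventuallyEq hF0
    have hE : -Real.sin (A₁ θ) * deriv A₁ θ * ((y θ).1 - (y 0).1)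
          + Real.cos (A₁ θ) * (deriv y θ).1
          + (Real.cos (A₁ θ) * deriv A₁ θ * ((y θ).2 - (y 0).2)
            + Real.sin (A₁ θ) * (deriv y θ).2) = 0 := hFd.unique hFd0
    show H θ = 0
    have hHE : H θ = (-Real.sin (A₁ θ) * deriv A₁ θ * ((y θ).1 - (y 0).1)
          + Real.cos (A₁ θ) * (deriv y θ).1
          + (Real.cos (A₁ θ) * deriv A₁ θ * ((y θ).2 - (y 0).2)
            + Real.sin (A₁ θ) * (deriv y θ).2)) / θ := by
      rw [hHdef]; ring
    rw [hHE, hE, zero_div]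
  have tH0 : Tendsto H (𝓝[≠] (0:ℝ)) (𝓝 0) := by
    rw [tendsto_congr' hH0]; exact tendsto_const_nhds
  have heq : L * (-0) * 0 + 1 * q + L * 1 * s + L * s = 0 := tendsto_nhds_unique tH tH0
  have hL : L = 1 / 2 := by
    have h2 : s * (2 * L - 1) = 0 := by rw [hq] at heq; linear_combination heq
    rcases mul_eq_zero.mp h2 with h | h
    · exact absurd h (ne_of_lt hs)
    · linarith
  refine ⟨hL, ?_⟩
  -- Part 2: continuity of deriv A₁ plus MVT
  have hc : ContinuousAt (deriv A₁) 0 := (hA₁.continuous_deriv le_rfl).continuousAt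
  obtain ⟨δ, hδpos, hδ⟩ := Metric.continuousAt_iff.mp hc (1/4) (by norm_num)
  refine ⟨min (δ/2) a, ⟨lt_min (by linarith) ha, min_le_right _ _⟩, 1/4, 3/4,
    by norm_num, by norm_num, by norm_num, ?_, ?_⟩
  · -- ratio bounds via MVT
    intro θ hθ hθ0
    have haδ : min (δ/2) a ≤ δ/2 := min_le_left _ _
    have hderivB : ∀ ξ ∈ Icc (-(min (δ/2) a)) (min (δ/2) a),
        1/4 ≤ deriv A₁ ξ ∧ deriv A₁ ξ ≤ 3/4 := by
      intro ξ hξ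
      have hd : dist ξ 0 < δ := by
        rw [Real.dist_eq, sub_zero]
        have h : |ξ| ≤ min (δ/2) a := abs_le.mpr ⟨hξ.1, hξ.2⟩
        calc |ξ| ≤ δ/2 := le_trans h (min_le_left _ _)
          _ < δ := by linarith
      have := hδ hd
      rw [Real.dist_eq, ← hLdef, hL] at this
      have h := abs_lt.mp this
      constructor <;> linarith [h.1, h.2]
    rcases lt_or_gt_of_ne hθ0 with hneg | hpos
    · obtain ⟨ξ, hξ, hξeq⟩ := exists_hasDerivAt_eq_slope A₁ (deriv A₁) hneg
        hA₁.continuous.continuousOn (fun x _ => (hA₁d x).hasDerivAt)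
      have hminpos : 0 < min (δ/2) a := lt_min (by linarith) ha
      have hξb : ξ ∈ Icc (-(min (δ/2) a)) (min (δ/2) a) :=
        ⟨by have := hθ.1; have := hξ.1; linarith,
         by have := hξ.2; linarith⟩
      have hb := hderivB ξ hξb
      have hratio : A₁ θ / θ = deriv A₁ ξ := by
        rw [hξeq, hA₁0, zero_sub, zero_sub, neg_div_neg_eq]
      rw [hratio]; exact hb
    · obtain ⟨ξ, hξ, hξeq⟩ := exists_hasDerivAt_eq_slope A₁ (deriv A₁) hpos
        hA₁.continuous.continuousOn (fun x _ => (hA₁d x).hasDerivAt)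
      have hminpos : 0 < min (δ/2) a := lt_min (by linarith) ha
      have hξb : ξ ∈ Icc (-(min (δ/2) a)) (min (δ/2) a) :=
        ⟨by have := hξ.1; linarith, by have := hξ.2; have := hθ.2; linarith⟩
      have hb := hderivB ξ hξb
      have hratio : A₁ θ / θ = deriv A₁ ξ := by
        rw [hξeq, hA₁0, sub_zero, sub_zero]
      rw [hratio]; exact hb
  · intro θ hθ
    have hd : dist θ 0 < δ := by
      rw [Real.dist_eq, sub_zero]
      have h1 : |θ| ≤ min (δ/2) a := abs_le.mpr ⟨hθ.1, hθ.2⟩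
      calc |θ| ≤ δ/2 := le_trans h1 (min_le_left _ _)
        _ < δ := by linarith
    have := hδ hd
    rw [Real.dist_eq, ← hLdef, hL] at this
    have h := abs_lt.mp this
    constructor <;> linarith [h.1, h.2]
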